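/- arXiv:1802.07456 — 2 statements merged into one kernel-verified Lean document; each statement's English description precedes it below -/
import Mathlib

section
/- Let n ≥ 1 and let a, c be n-times differentiable complex functions with a nonvanishing on an open set. Then the n-th derivative of c/a satisfies the higher-order quotient rule: (c/a)^{(n)} = Σ_{m=0}^{n} binom(n,m) c^{(n−m)} · Σ_{p ∈ 𝒫(m)} [ (−1)^{|p|} m! / (p_1! (1!)^{p_1} ⋯ p_m! (m!)^{p_m}) ] · (|p|! / a^{|p|+1}) · ∏_{i=1}^{m} (a^{(i)})^{p_i}. -/
open Complex Finset Topology

namespace HOQR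

noncomputable def pTerm (a : ℂ → ℂ) (x : ℂ) (μ : Multiset ℕ) : ℂ :=
  ((-1 : ℂ) ^ (Multiset.card μ) * (μ.sum.factorial : ℂ) /
      ((∏ i ∈ μ.toFinset, ((μ.count i).factorial : ℂ)) *
        (μ.map (fun i => (i.factorial : ℂ))).prod)) *
    (((Multiset.card μ).factorial : ℂ) / a x ^ (Multiset.card μ + 1)) *
    (μ.map (fun i => iteratedDeriv i a x)).prod

noncomputable def G (a : ℂ → ℂ) (x : ℂ) (m : ℕ) : ℂ :=
  ∑ μ : Nat.Partition m, pTerm a x μ.parts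

lemma card_finsum {α : Type*} (s : Finset α) (f : α → Multiset ℕ) :
    Multiset.card (∑ x ∈ s, f x) = ∑ x ∈ s, Multiset.card (f x) := by
  classical
  induction s using Finset.cons_induction with
  | empty => simp
  | cons a s h ih => simp [Finset.sum_cons, ih]

lemma map_finsum {α β : Type*} (s : Finset α) (f : α → Multiset ℕ) (g : ℕ → β) :
    (∑ x ∈ s, f x).map g = ∑ x ∈ s, (f x).map g := by
  classical
  induction s using Finset.cons_induction with
  | empty => simp
  | cons a s h ih => rw [Finset.sum_cons, Finset.sum_cons, Multiset.map_add, ih]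

lemma card_le_sum (ms : Multiset ℕ) (h : ∀ i ∈ ms, 1 ≤ i) : Multiset.card ms ≤ ms.sum := by
  induction ms using Multiset.induction_on with
  | empty => simp
  | cons a s ih =>
    simp only [Multiset.card_cons, Multiset.sum_cons]
    have h1 : 1 ≤ a := h a (Multiset.mem_cons_self a s)
    have h2 := ih fun i hi => h i (Multiset.mem_cons_of_mem hi)
    omega

lemma diffAt_iteratedDeriv {N m : ℕ} {f : ℂ → ℂ} {s : Set ℂ} (hs : IsOpen s)
    (hf : ContDiffOn ℂ N f s) (hm : m < N) {x : ℂ} (hx : x ∈ s) :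
    DifferentiableAt ℂ (iteratedDeriv m f) x := by
  have h1 : DifferentiableWithinAt ℂ (iteratedDerivWithin m f s) s x :=
    hf.differentiableOn_iteratedDerivWithin (by exact_mod_cast hm) hs.uniqueDiffOn x hx
  have h2 : iteratedDerivWithin m f s =ᶠ[𝓝 x] iteratedDeriv m f := by
    filter_upwards [hs.mem_nhds hx] with y hy
    simp only [iteratedDerivWithin, iteratedDeriv, iteratedFDerivWithin_of_isOpen m hs hy]
  exact (Filter.EventuallyEq.differentiableAt_iff h2).mp (h1.differentiableAt (hs.mem_nhds hx))

lemma leibniz {N : ℕ} {f g : ℂ → ℂ} {s : Set ℂ} (hs : IsOpen s)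
    (hf : ContDiffOn ℂ N f s) (hg : ContDiffOn ℂ N g s) :
    ∀ m ≤ N, ∀ x ∈ s, iteratedDeriv m (fun y => f y * g y) x =
      ∑ j ∈ Finset.range (m + 1),
        (m.choose j : ℂ) * iteratedDeriv j f x * iteratedDeriv (m - j) g x := by
  intro m
  induction m with
  | zero => intro _ x _; simp
  | succ m ih =>
    intro hm x hx
    have hmN : m < N := lt_of_lt_of_le (Nat.lt_succ_self m) hm
    have hev : iteratedDeriv m (fun y => f y * g y) =ᶠ[𝓝 x]
        (fun y => ∑ j ∈ Finset.range (m + 1),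
          (m.choose j : ℂ) * iteratedDeriv j f y * iteratedDeriv (m - j) g y) := by
      filter_upwards [hs.mem_nhds hx] with y hy
      exact ih hmN.le y hy
    have hdf : ∀ j ≤ m, DifferentiableAt ℂ (iteratedDeriv j f) x := fun j hj =>
      diffAt_iteratedDeriv hs hf (lt_of_le_of_lt hj hmN) hx
    have hdg : ∀ j ≤ m, DifferentiableAt ℂ (iteratedDeriv j g) x := fun j hj =>
      diffAt_iteratedDeriv hs hg (lt_of_le_of_lt hj hmN) hx
    rw [iteratedDeriv_succ, hev.deriv_eq, deriv_fun_sum (fun j hj => by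
      have hj' := Nat.lt_succ_iff.mp (Finset.mem_range.mp hj)
      exact ((hdf j hj').const_mul _).mul (hdg (m - j) (Nat.sub_le m j)))]
    have hstep : ∀ j ∈ Finset.range (m + 1),
        deriv (fun y => (m.choose j : ℂ) * iteratedDeriv j f y * iteratedDeriv (m - j) g y) x
          = (m.choose j : ℂ) * iteratedDeriv (j+1) f x * iteratedDeriv (m - j) g x
            + (m.choose j : ℂ) * iteratedDeriv j f x * iteratedDeriv (m - j + 1) g x := by
      intro j hj
      have hj' := Nat.lt_succ_iff.mp (Finset.mem_range.mp hj)
      rw [deriv_fun_mul (((hdf j hj').const_mul _)) (hdg (m - j) (Nat.sub_le m j)),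
        deriv_const_mul _ (hdf j hj'), ← iteratedDeriv_succ, ← iteratedDeriv_succ]
    rw [Finset.sum_congr rfl hstep, Finset.sum_add_distrib]
    have hR : ∑ j ∈ Finset.range (m + 1 + 1), ((m+1).choose j : ℂ) * iteratedDeriv j f x *
        iteratedDeriv (m + 1 - j) g x
        = (∑ j ∈ Finset.range (m + 1), (m.choose j : ℂ) *
            (iteratedDeriv j f x * iteratedDeriv (m + 1 - j) g x)) +
          ∑ j ∈ Finset.range (m + 1), (m.choose j : ℂ) *
            (iteratedDeriv (j+1) f x * iteratedDeriv (m - j) g x) := by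
      rw [← Finset.sum_choose_succ_mul
        (fun i j => iteratedDeriv i f x * iteratedDeriv j g x) m]
      exact Finset.sum_congr rfl fun j _ => mul_assoc _ _ _
    rw [hR]
    have h1 : ∀ j ∈ Finset.range (m+1), (m.choose j : ℂ) * iteratedDeriv j f x *
        iteratedDeriv (m - j + 1) g x
        = (m.choose j : ℂ) * (iteratedDeriv j f x * iteratedDeriv (m + 1 - j) g x) := by
      intro j hj
      have hj' := Nat.lt_succ_iff.mp (Finset.mem_range.mp hj)
      rw [Nat.succ_sub hj', mul_assoc]
    have h2 : ∀ j ∈ Finset.range (m+1), (m.choose j : ℂ) * iteratedDeriv (j+1) f x *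
        iteratedDeriv (m - j) g x
        = (m.choose j : ℂ) * (iteratedDeriv (j+1) f x * iteratedDeriv (m - j) g x) := by
      intro j _; ring
    rw [Finset.sum_congr rfl h1, Finset.sum_congr rfl h2, add_comm]



lemma erase_term (a : ℂ → ℂ) (x : ℂ) (hax : a x ≠ 0) (μ : Multiset ℕ)
    {j : ℕ} (hj : j ∈ μ) :
    (Multiset.card μ : ℂ) * ((μ.sum.choose j : ℂ) * iteratedDeriv j a x * pTerm a x (μ.erase j))
      = -(μ.count j : ℂ) * a x * pTerm a x μ := by
  classical
  set ν := μ.erase j with hν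
  have hcons : j ::ₘ ν = μ := Multiset.cons_erase hj
  have hcard : Multiset.card μ = Multiset.card ν + 1 := by rw [← hcons]; simp
  have hsum : μ.sum = j + ν.sum := by rw [← hcons]; simp
  have hjle : j ≤ μ.sum := by omega
  have hmapf : (μ.map fun i => (i.factorial : ℂ)).prod
      = (j.factorial : ℂ) * (ν.map fun i => (i.factorial : ℂ)).prod := by
    rw [← hcons, Multiset.map_cons, Multiset.prod_cons]
  have hmapD : (μ.map fun i => iteratedDeriv i a x).prod
      = iteratedDeriv j a x * (ν.map fun i => iteratedDeriv i a x).prod := by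
    rw [← hcons, Multiset.map_cons, Multiset.prod_cons]
  have hjT : j ∈ μ.toFinset := Multiset.mem_toFinset.mpr hj
  have hcj : 1 ≤ μ.count j := Multiset.one_le_count_iff_mem.mpr hj
  have hfc : ((μ.count j).factorial : ℂ)
      = (μ.count j : ℂ) * ((ν.count j).factorial : ℂ) := by
    have h1 : ν.count j = μ.count j - 1 := Multiset.count_erase_self j μ
    obtain ⟨d, hd⟩ : ∃ d, μ.count j = d + 1 := ⟨μ.count j - 1, by omega⟩
    rw [h1, hd]
    simp only [Nat.add_sub_cancel, Nat.factorial_succ]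
    push_cast
    ring
  have hPc : (∏ i ∈ μ.toFinset, ((μ.count i).factorial : ℂ))
      = (μ.count j : ℂ) * ∏ i ∈ μ.toFinset, ((ν.count i).factorial : ℂ) := by
    have hmid : (∏ i ∈ μ.toFinset.erase j, ((μ.count i).factorial : ℂ))
        = ∏ i ∈ μ.toFinset.erase j, ((ν.count i).factorial : ℂ) :=
      Finset.prod_congr rfl fun i hi => by
        rw [hν, Multiset.count_erase_of_ne (Finset.ne_of_mem_erase hi)]
    rw [← Finset.mul_prod_erase _ _ hjT,
      ← Finset.mul_prod_erase _ (fun i => ((ν.count i).factorial : ℂ)) hjT,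
      hfc, hmid]
    ring
  have hPc2 : ∏ i ∈ μ.toFinset, ((ν.count i).factorial : ℂ)
      = ∏ i ∈ ν.toFinset, ((ν.count i).factorial : ℂ) := by
    refine (Finset.prod_subset (Multiset.toFinset_subset.mpr
      (Multiset.subset_of_le (Multiset.erase_le j μ))) fun i _ hni => ?_).symm
    rw [Multiset.count_eq_zero_of_notMem (fun h => hni (Multiset.mem_toFinset.mpr h))]
    simp
  have hchoose : (((j + ν.sum).choose j : ℕ) : ℂ)
      = ((j + ν.sum).factorial : ℂ) / ((j.factorial : ℂ) * ((ν.sum).factorial : ℂ)) := by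
    rw [Nat.cast_choose ℂ (Nat.le_add_right j ν.sum), Nat.add_sub_cancel_left]
  have hfne : ∀ k : ℕ, ((k.factorial : ℂ)) ≠ 0 :=
    fun k => Nat.cast_ne_zero.mpr (Nat.factorial_ne_zero k)
  have hPcne : (∏ i ∈ ν.toFinset, ((ν.count i).factorial : ℂ)) ≠ 0 :=
    Finset.prod_ne_zero_iff.mpr fun i _ => hfne _
  have hPfne : (ν.map fun i => (i.factorial : ℂ)).prod ≠ 0 := by
    refine Multiset.prod_ne_zero fun h => ?_
    obtain ⟨i, _, hi⟩ := Multiset.mem_map.mp h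
    exact hfne i hi
  have hcjne : (μ.count j : ℂ) ≠ 0 := Nat.cast_ne_zero.mpr (by omega)
  have hkne : ((Multiset.card ν : ℂ) + 1) ≠ 0 := Nat.cast_add_one_ne_zero (Multiset.card ν)
  rw [pTerm, pTerm, hcard, hsum, hmapf, hmapD, hPc, hPc2, hchoose, Nat.factorial_succ]
  push_cast
  field_simp [hax, hfne, hPcne, hPfne, hcjne]
  ring



lemma sum_erase_term (a : ℂ → ℂ) (x : ℂ) (hax : a x ≠ 0) (μ : Multiset ℕ) (hne : μ ≠ 0) :
    ∑ j ∈ μ.toFinset, (μ.sum.choose j : ℂ) * iteratedDeriv j a x * pTerm a x (μ.erase j)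
      = -(a x) * pTerm a x μ := by
  classical
  have hkne : ((Multiset.card μ : ℕ) : ℂ) ≠ 0 := by
    simpa [Multiset.card_eq_zero] using hne
  apply mul_left_cancel₀ hkne
  rw [Finset.mul_sum,
    Finset.sum_congr rfl fun j hj => erase_term a x hax μ (Multiset.mem_toFinset.mp hj)]
  have hcount : ∑ j ∈ μ.toFinset, ((μ.count j : ℕ) : ℂ) = ((Multiset.card μ : ℕ) : ℂ) := by
    rw [← Nat.cast_sum]
    exact_mod_cast congrArg (Nat.cast : ℕ → ℂ) (Multiset.toFinset_sum_count_eq μ)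
  calc ∑ j ∈ μ.toFinset, -(μ.count j : ℂ) * a x * pTerm a x μ
      = (∑ j ∈ μ.toFinset, ((μ.count j : ℕ) : ℂ)) * (-(a x) * pTerm a x μ) := by
        rw [Finset.sum_mul]
        exact Finset.sum_congr rfl fun j _ => by ring
    _ = ((Multiset.card μ : ℕ) : ℂ) * (-(a x) * pTerm a x μ) := by rw [hcount]

lemma key_identity (a : ℂ → ℂ) (x : ℂ) (hax : a x ≠ 0) (m : ℕ) (hm : 1 ≤ m) :
    a x * G a x m
      + ∑ j ∈ Finset.Icc 1 m, (m.choose j : ℂ) * iteratedDeriv j a x * G a x (m - j) = 0 := by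
  classical
  have hmain : ∑ j ∈ Finset.Icc 1 m, (m.choose j : ℂ) * iteratedDeriv j a x * G a x (m - j)
      = -(a x) * G a x m := by
    have h1 : ∀ j ∈ Finset.Icc 1 m, (m.choose j : ℂ) * iteratedDeriv j a x * G a x (m - j)
        = ∑ ν : Nat.Partition (m - j),
            (m.choose j : ℂ) * iteratedDeriv j a x * pTerm a x ν.parts := by
      intro j _
      rw [G, Finset.mul_sum]
    rw [Finset.sum_congr rfl h1, Finset.sum_sigma']
    rw [Finset.sum_bij' (s := (Finset.Icc 1 m).sigma fun j => (Finset.univ : Finset (Nat.Partition (m - j))))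
      (t := (Finset.univ : Finset (Nat.Partition m)).sigma fun μ => μ.parts.toFinset)
      (g := fun q => (m.choose q.2 : ℂ) * iteratedDeriv q.2 a x * pTerm a x (q.1.parts.erase q.2))
      (i := fun p hp =>
        ⟨⟨p.1 ::ₘ p.2.parts, by
            intro i hi
            rcases Multiset.mem_cons.mp hi with h | h
            · subst h; exact lt_of_lt_of_le one_pos (Finset.mem_Icc.mp (Finset.mem_sigma.mp hp).1).1
            · exact p.2.parts_pos h, by
            rw [Multiset.sum_cons, p.2.parts_sum]
            have := (Finset.mem_Icc.mp (Finset.mem_sigma.mp hp).1).2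
            omega⟩, p.1⟩)
      (j := fun q hq =>
        ⟨q.2, ⟨q.1.parts.erase q.2, fun {i} hi =>
            q.1.parts_pos (Multiset.mem_of_mem_erase hi), by
          have hq2 : q.2 ∈ q.1.parts :=
            Multiset.mem_toFinset.mp (Finset.mem_sigma.mp hq).2
          have h := congrArg Multiset.sum (Multiset.cons_erase hq2)
          rw [Multiset.sum_cons, q.1.parts_sum] at h
          omega⟩⟩)
      (hi := fun p hp => by
        refine Finset.mem_sigma.mpr ⟨Finset.mem_univ _, ?_⟩
        exact Multiset.mem_toFinset.mpr (Multiset.mem_cons_self _ _))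
      (hj := fun q hq => by
        have hq2 : q.2 ∈ q.1.parts :=
          Multiset.mem_toFinset.mp (Finset.mem_sigma.mp hq).2
        refine Finset.mem_sigma.mpr ⟨Finset.mem_Icc.mpr ⟨q.1.parts_pos hq2, ?_⟩, Finset.mem_univ _⟩
        have : q.2 ≤ q.1.parts.sum :=
          Multiset.single_le_sum (fun _ _ => Nat.zero_le _) _ hq2
        rw [q.1.parts_sum] at this
        exact this)
      (left_neg := fun p hp => by
        refine Sigma.ext rfl (heq_of_eq (Nat.Partition.ext ?_))
        exact Multiset.erase_cons_head _ _)
      (right_neg := fun q hq => by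
        have hq2 : q.2 ∈ q.1.parts :=
          Multiset.mem_toFinset.mp (Finset.mem_sigma.mp hq).2
        exact Sigma.ext (Nat.Partition.ext (Multiset.cons_erase hq2)) HEq.rfl)
      (h := fun p hp => by
        simp only [Multiset.erase_cons_head])]
    rw [Finset.sum_sigma]
    have h2 : ∀ μ : Nat.Partition m,
        ∑ j ∈ μ.parts.toFinset, (m.choose j : ℂ) * iteratedDeriv j a x *
          pTerm a x (μ.parts.erase j) = -(a x) * pTerm a x μ.parts := by
      intro μ
      have hμne : μ.parts ≠ 0 := by
        intro h
        have := μ.parts_sum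
        rw [h] at this
        simp at this
        omega
      have := sum_erase_term a x hax μ.parts hμne
      rwa [μ.parts_sum] at this
    rw [Finset.sum_congr rfl fun μ _ => h2 μ, ← Finset.mul_sum, G]
  rw [hmain]
  ring



lemma iteratedDeriv_fun_zero (m : ℕ) : iteratedDeriv m (fun _ : ℂ => (0:ℂ)) = fun _ => 0 := by
  induction m with
  | zero => simp
  | succ k ihk =>
    rw [iteratedDeriv_succ', show deriv (fun _ : ℂ => (0:ℂ)) = fun _ => 0 by simp]
    exact ihk

lemma G_zero (a : ℂ → ℂ) (x : ℂ) : G a x 0 = (a x)⁻¹ := by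
  rw [G]
  rw [Finset.sum_eq_single_of_mem default (Finset.mem_univ _) (fun b _ hb => by
    exact absurd (Subsingleton.elim b default) hb)]
  have hparts : (default : Nat.Partition 0).parts = 0 := by
    have h := (default : Nat.Partition 0).parts_sum
    by_contra hne
    obtain ⟨i, hi⟩ := Multiset.exists_mem_of_ne_zero hne
    have : 0 < i := (default : Nat.Partition 0).parts_pos hi
    have : i ≤ (default : Nat.Partition 0).parts.sum := Multiset.single_le_sum (fun _ _ => Nat.zero_le _) _ hi
    omega
  rw [pTerm, hparts]
  simp

lemma iteratedDeriv_inv_eq {N : ℕ} {a : ℂ → ℂ} {s : Set ℂ} (hs : IsOpen s)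
    (ha : ContDiff ℂ N a) (hane : ∀ y ∈ s, a y ≠ 0) :
    ∀ m ≤ N, ∀ x ∈ s, iteratedDeriv m (fun y => (a y)⁻¹) x = G a x m := by
  intro m
  induction m using Nat.strong_induction_on with
  | _ m ih =>
    intro hm x hx
    match m with
    | 0 => simpa using (G_zero a x).symm
    | (m + 1) =>
      have hinv : ContDiffOn ℂ N (fun y => (a y)⁻¹) s := (ha.contDiffOn).inv hane
      have hL := leibniz hs ha.contDiffOn hinv (m+1) hm x hx
      have hone : iteratedDeriv (m+1) (fun y => a y * (a y)⁻¹) x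
          = iteratedDeriv (m+1) (fun _ : ℂ => (1:ℂ)) x := by
        apply Filter.EventuallyEq.iteratedDeriv_eq
        filter_upwards [hs.mem_nhds hx] with y hy
        exact mul_inv_cancel₀ (hane y hy)
      have hzero : iteratedDeriv (m+1) (fun _ : ℂ => (1:ℂ)) x = 0 := by
        have h : iteratedDeriv (m+1) (fun _ : ℂ => (1:ℂ)) = fun _ => 0 := by
          rw [iteratedDeriv_succ', show deriv (fun _ : ℂ => (1:ℂ)) = fun _ => 0 by simp,
            iteratedDeriv_fun_zero]
        rw [h]
      rw [hone, hzero] at hL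
      -- split off j = 0
      rw [Finset.sum_range_succ'] at hL
      simp only [Nat.choose_zero_right, Nat.cast_one, one_mul, iteratedDeriv_zero,
        Nat.sub_zero] at hL
      -- rewrite inner iterated derivs with ih
      have hterm : ∀ i ∈ Finset.range (m+1),
          ((m+1).choose (i+1) : ℂ) * iteratedDeriv (i+1) a x *
              iteratedDeriv (m + 1 - (i+1)) (fun y => (a y)⁻¹) x
            = ((m+1).choose (i+1) : ℂ) * iteratedDeriv (i+1) a x * G a x (m + 1 - (i+1)) := by
        intro i hi
        rw [ih (m + 1 - (i+1)) (by omega) (by omega) x hx]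
      rw [Finset.sum_congr rfl hterm] at hL
      have hkey := key_identity a x (hane x hx) (m+1) (by omega)
      have hsum : ∑ j ∈ Finset.Icc 1 (m+1), ((m+1).choose j : ℂ) * iteratedDeriv j a x *
          G a x (m + 1 - j)
          = ∑ i ∈ Finset.range (m+1), ((m+1).choose (i+1) : ℂ) * iteratedDeriv (i+1) a x *
            G a x (m + 1 - (i+1)) := by
        rw [← Finset.Ico_add_one_right_eq_Icc, Finset.sum_Ico_eq_sum_range]
        exact Finset.sum_congr (by norm_num) fun i _ => by rw [add_comm 1 i]
      rw [hsum] at hkey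
      have : a x * iteratedDeriv (m+1) (fun y => (a y)⁻¹) x = a x * G a x (m+1) := by
        linear_combination -hL - hkey
      exact mul_left_cancel₀ (hane x hx) this



section
variable (a : ℂ → ℂ) (x : ℂ) (m : ℕ)

/-- The multiset associated to a multiplicity vector. -/
def M (p : Fin m → Fin (m + 1)) : Multiset ℕ :=
  ∑ i : Fin m, Multiset.replicate ((p i).1) ((i.1) + 1)

lemma count_M (p : Fin m → Fin (m + 1)) (i : Fin m) : (M m p).count (i.1 + 1) = (p i).1 := by
  classical
  rw [M, Multiset.count_sum']
  rw [Finset.sum_eq_single i (fun b _ hb => by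
    rw [Multiset.count_replicate, if_neg (by
      intro h
      exact hb (Fin.ext (by omega)))]) (fun h => absurd (Finset.mem_univ i) h)]
  rw [Multiset.count_replicate, if_pos rfl]

lemma mem_M (p : Fin m → Fin (m + 1)) {j : ℕ} (hj : j ∈ M m p) : ∃ i : Fin m, j = i.1 + 1 := by
  rw [M] at hj
  obtain ⟨i, _, hi⟩ := Multiset.mem_sum.mp hj
  exact ⟨i, Multiset.eq_of_mem_replicate hi⟩

lemma sum_M (p : Fin m → Fin (m + 1)) : (M m p).sum = ∑ i : Fin m, (i.1 + 1) * (p i).1 := by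
  rw [M, Multiset.sum_sum]
  exact Finset.sum_congr rfl fun i _ => by
    rw [Multiset.sum_replicate, smul_eq_mul, mul_comm]

lemma card_M (p : Fin m → Fin (m + 1)) : Multiset.card (M m p) = ∑ i : Fin m, (p i).1 := by
  rw [M, card_finsum]
  exact Finset.sum_congr rfl fun i _ => Multiset.card_replicate _ _

end

lemma innerSum_eq (a : ℂ → ℂ) (x : ℂ) (m : ℕ) :
    ∑ p ∈ Finset.univ.filter
        (fun p : Fin m → Fin (m + 1) => ∑ i, (i.1 + 1) * (p i).1 = m),
      ((-1 : ℂ) ^ (∑ i, (p i).1) * (m.factorial : ℂ) /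
          (∏ i : Fin m, (((p i).1.factorial : ℂ) * ((i.1 + 1).factorial : ℂ) ^ (p i).1))) *
        (((∑ i, (p i).1).factorial : ℂ) / a x ^ ((∑ i, (p i).1) + 1)) *
        ∏ i : Fin m, (iteratedDeriv (i.1 + 1) a x) ^ (p i).1
      = G a x m := by
  classical
  rw [G]
  refine Finset.sum_bij'
    (i := fun p hp =>
      (⟨M m p, fun {j} hj => by
          obtain ⟨i, rfl⟩ := mem_M m p hj
          omega, by
        rw [sum_M]
        exact (Finset.mem_filter.mp hp).2⟩ : Nat.Partition m))
    (j := fun μ _ => fun i : Fin m =>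
      (⟨μ.parts.count (i.1 + 1), by
        have h1 := Multiset.count_le_card (i.1 + 1) μ.parts
        have h2 := card_le_sum μ.parts (fun j hj => μ.parts_pos hj)
        rw [μ.parts_sum] at h2
        omega⟩ : Fin (m + 1)))
    (hi := fun p hp => Finset.mem_univ _)
    (hj := ?_)
    (left_neg := ?_)
    (right_neg := ?_)
    ?_
  · -- hj : membership in the filter
    intro μ _
    refine Finset.mem_filter.mpr ⟨Finset.mem_univ _, ?_⟩
    have hsub : μ.parts.toFinset ⊆ Finset.Icc 1 m := by
      intro j hj
      have hjm : j ∈ μ.parts := Multiset.mem_toFinset.mp hj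
      refine Finset.mem_Icc.mpr ⟨μ.parts_pos hjm, ?_⟩
      have := Multiset.single_le_sum (fun _ _ => Nat.zero_le _) _ hjm
      rwa [μ.parts_sum] at this
    have key : ∑ j ∈ μ.parts.toFinset, j * μ.parts.count j = m := by
      have h1 : ∀ j : ℕ, (μ.parts.count j • ({j} : Multiset ℕ)).sum = j * μ.parts.count j := by
        intro j
        rw [Multiset.nsmul_singleton, Multiset.sum_replicate, smul_eq_mul, mul_comm]
      calc ∑ j ∈ μ.parts.toFinset, j * μ.parts.count j
          = ∑ j ∈ μ.parts.toFinset, (μ.parts.count j • ({j} : Multiset ℕ)).sum :=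
            Finset.sum_congr rfl fun j _ => (h1 j).symm
        _ = (∑ j ∈ μ.parts.toFinset, μ.parts.count j • ({j} : Multiset ℕ)).sum :=
            (Multiset.sum_sum _ _).symm
        _ = μ.parts.sum := by rw [Multiset.toFinset_sum_count_nsmul_eq]
        _ = m := μ.parts_sum
    have key2 : ∑ j ∈ Finset.Icc 1 m, j * μ.parts.count j
        = ∑ j ∈ μ.parts.toFinset, j * μ.parts.count j :=
      (Finset.sum_subset hsub fun j _ hj => by
        rw [Multiset.count_eq_zero_of_notMem (fun hmem => hj (Multiset.mem_toFinset.mpr hmem)),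
          mul_zero]).symm
    calc ∑ i : Fin m, (i.1 + 1) * μ.parts.count (i.1 + 1)
        = ∑ i ∈ Finset.range m, (i + 1) * μ.parts.count (i + 1) :=
          Fin.sum_univ_eq_sum_range (fun i => (i + 1) * μ.parts.count (i + 1)) m
      _ = ∑ j ∈ Finset.Icc 1 m, j * μ.parts.count j := by
          rw [← Finset.Ico_add_one_right_eq_Icc, Finset.sum_Ico_eq_sum_range]
          exact (Finset.sum_congr (by norm_num) fun i _ => by rw [add_comm 1 i]).symm
      _ = ∑ j ∈ μ.parts.toFinset, j * μ.parts.count j := key2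
      _ = m := key
  · -- left_inv
    intro p hp
    funext i
    exact Fin.ext (count_M m p i)
  · -- right_inv
    intro μ _
    refine Nat.Partition.ext ?_
    have hsub : μ.parts.toFinset ⊆ Finset.Icc 1 m := by
      intro j hj
      have hjm : j ∈ μ.parts := Multiset.mem_toFinset.mp hj
      refine Finset.mem_Icc.mpr ⟨μ.parts_pos hjm, ?_⟩
      have := Multiset.single_le_sum (fun _ _ => Nat.zero_le _) _ hjm
      rwa [μ.parts_sum] at this
    show M m _ = μ.parts
    calc M m (fun i : Fin m => (⟨μ.parts.count (i.1 + 1), _⟩ : Fin (m+1)))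
        = ∑ i : Fin m, Multiset.replicate (μ.parts.count (i.1 + 1)) (i.1 + 1) := rfl
      _ = ∑ i ∈ Finset.range m, Multiset.replicate (μ.parts.count (i + 1)) (i + 1) :=
          Fin.sum_univ_eq_sum_range (fun i => Multiset.replicate (μ.parts.count (i + 1)) (i + 1)) m
      _ = ∑ j ∈ Finset.Icc 1 m, Multiset.replicate (μ.parts.count j) j := by
          rw [← Finset.Ico_add_one_right_eq_Icc, Finset.sum_Ico_eq_sum_range]
          exact (Finset.sum_congr (by norm_num) fun i _ => by rw [add_comm 1 i]).symm
      _ = ∑ j ∈ μ.parts.toFinset, Multiset.replicate (μ.parts.count j) j :=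
          (Finset.sum_subset hsub fun j _ hj => by
            rw [Multiset.count_eq_zero_of_notMem (fun hmem => hj (Multiset.mem_toFinset.mpr hmem)),
              Multiset.replicate_zero]).symm
      _ = ∑ j ∈ μ.parts.toFinset, μ.parts.count j • ({j} : Multiset ℕ) :=
          Finset.sum_congr rfl fun j _ => (Multiset.nsmul_singleton _ _).symm
      _ = μ.parts := Multiset.toFinset_sum_count_nsmul_eq _
  · -- values
    intro p hp
    have hpm : ∑ i : Fin m, (i.1 + 1) * (p i).1 = m := (Finset.mem_filter.mp hp).2
    show _ = pTerm a x (M m p)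
    have hcard : Multiset.card (M m p) = ∑ i : Fin m, (p i).1 := card_M m p
    have hsum : (M m p).sum = m := by rw [sum_M]; exact hpm
    have hPc : (∏ i ∈ (M m p).toFinset, (((M m p).count i).factorial : ℂ))
        = ∏ i : Fin m, (((p i).1.factorial : ℂ)) := by
      have himg : (M m p).toFinset ⊆ Finset.image (fun i : Fin m => i.1 + 1) Finset.univ := by
        intro j hj
        obtain ⟨i, rfl⟩ := mem_M m p (Multiset.mem_toFinset.mp hj)
        exact Finset.mem_image.mpr ⟨i, Finset.mem_univ _, rfl⟩
      rw [Finset.prod_subset himg (fun j _ hj => by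
        rw [Multiset.count_eq_zero_of_notMem (fun hmem => hj (Multiset.mem_toFinset.mpr hmem))]
        simp)]
      rw [Finset.prod_image (fun i _ i' _ h => Fin.ext (by omega))]
      exact Finset.prod_congr rfl fun i _ => by rw [count_M]
    have hPf : ((M m p).map fun i => (i.factorial : ℂ)).prod
        = ∏ i : Fin m, ((i.1 + 1).factorial : ℂ) ^ (p i).1 := by
      rw [M, map_finsum, Multiset.prod_sum]
      exact Finset.prod_congr rfl fun i _ => by
        rw [Multiset.map_replicate, Multiset.prod_replicate]
    have hPD : ((M m p).map fun i => iteratedDeriv i a x).prod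
        = ∏ i : Fin m, (iteratedDeriv (i.1 + 1) a x) ^ (p i).1 := by
      rw [M, map_finsum, Multiset.prod_sum]
      exact Finset.prod_congr rfl fun i _ => by
        rw [Multiset.map_replicate, Multiset.prod_replicate]
    rw [pTerm, hcard, hsum, hPc, hPf, hPD, Finset.prod_mul_distrib]


end HOQR

/-- Higher-order quotient rule. For `n ≥ 1` and `a, c` n-times
(continuously) differentiable with `a` nonvanishing on an open set `s`, at any `x ∈ s`:
`(c/a)^{(n)}(x) = Σ_{m=0}^{n} C(n,m) c^{(n−m)}(x) ·
  Σ_{p ∈ 𝒫(m)} [(−1)^{|p|} m! / (p₁!(1!)^{p₁}⋯p_m!(m!)^{p_m})] · (|p|!/a(x)^{|p|+1}) ·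
  ∏_{i=1}^m (a^{(i)}(x))^{p_i}`,
where `𝒫(m)` is the set of `p = (p₁,…,p_m)` with `Σ i·p_i = m`. -/
theorem higher_order_quotient_rule
    (n : ℕ) (hn : 1 ≤ n) (a c : ℂ → ℂ) (s : Set ℂ) (hs : IsOpen s)
    (ha : ContDiff ℂ n a) (hc : ContDiff ℂ n c)
    (hane : ∀ y ∈ s, a y ≠ 0) (x : ℂ) (hx : x ∈ s) :
    iteratedDeriv n (fun y => c y / a y) x =
      ∑ m ∈ Finset.range (n + 1),
        (n.choose m : ℂ) * iteratedDeriv (n - m) c x *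
          ∑ p ∈ Finset.univ.filter
              (fun p : Fin m → Fin (m + 1) => ∑ i, (i.1 + 1) * (p i).1 = m),
            ((-1 : ℂ) ^ (∑ i, (p i).1) * (m.factorial : ℂ) /
                (∏ i : Fin m, (((p i).1.factorial : ℂ) * ((i.1 + 1).factorial : ℂ) ^ (p i).1))) *
              (((∑ i, (p i).1).factorial : ℂ) / a x ^ ((∑ i, (p i).1) + 1)) *
              ∏ i : Fin m, (iteratedDeriv (i.1 + 1) a x) ^ (p i).1 := by
  have hinv : ContDiffOn ℂ n (fun y => (a y)⁻¹) s := (ha.contDiffOn).inv hane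
  have h1 : (fun y => c y / a y) = (fun y => (a y)⁻¹ * c y) := by
    funext y; rw [div_eq_mul_inv, mul_comm]
  rw [h1, HOQR.leibniz hs hinv hc.contDiffOn n le_rfl x hx]
  refine Finset.sum_congr rfl fun m hm => ?_
  rw [HOQR.iteratedDeriv_inv_eq hs ha hane m
      (Nat.lt_succ_iff.mp (Finset.mem_range.mp hm)) x hx,
    ← HOQR.innerSum_eq a x m]
  ring
end

section
/- Under a time shift q'(t) = q(t−t_0), the GNFT norming constants transform as Q'_{k,ℓ} = e^{−2jλ_k t_0} · Σ_{u=0}^{L_k−ℓ−1} (−2t_0)^u/u! · Q_{k,ℓ+u}. Equivalently, given that the shifted spectral functions satisfy a'(λ) = a(λ)e^{jλ t_0} and b'(λ) = b(λ)e^{−jλ t_0}, and that Q_{k,ℓ} = (j^ℓ/(L_k−ℓ−1)!) lim_{λ→λ_k} d^{L_k−ℓ−1}/dλ^{L_k−ℓ−1}[(λ−λ_k)^{L_k} b(λ)/a(λ)] (and similarly for the primed quantities), the stated sum formula holds. -/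
open Complex Filter Finset


lemma myAnalyticAt_iteratedDeriv {f : ℂ → ℂ} {x : ℂ} (hf : AnalyticAt ℂ f x) (n : ℕ) :
    AnalyticAt ℂ (iteratedDeriv n f) x := by
  rw [iteratedDeriv_eq_iterate]
  exact AnalyticOnNhd.iterated_deriv (fun y hy => hy : AnalyticOnNhd ℂ f {y | AnalyticAt ℂ f y})
    n x hf

lemma myPascal (D : ℕ → ℂ) (c : ℂ) (n : ℕ) :
    (∑ u ∈ Finset.range (n + 1), (n.choose u : ℂ) * c ^ u * D (n - u + 1))
      + c * ∑ u ∈ Finset.range (n + 1), (n.choose u : ℂ) * c ^ u * D (n - u)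
    = ∑ u ∈ Finset.range (n + 2), ((n + 1).choose u : ℂ) * c ^ u * D (n + 1 - u) := by
  have h1 : ∑ u ∈ Finset.range (n + 2), ((n + 1).choose u : ℂ) * c ^ u * D (n + 1 - u)
      = (∑ u ∈ Finset.range (n + 1), ((n + 1).choose (u + 1) : ℂ) * c ^ (u + 1) * D (n - u))
        + D (n + 1) := by
    rw [Finset.sum_range_succ' (fun u => ((n + 1).choose u : ℂ) * c ^ u * D (n + 1 - u)) (n + 1)]
    simp [Nat.succ_sub_succ]
  have h2 : ∀ u, ((n + 1).choose (u + 1) : ℂ) = (n.choose u : ℂ) + (n.choose (u + 1) : ℂ) := by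
    intro u; rw [Nat.choose_succ_succ]; push_cast; ring
  have h3 : (∑ u ∈ Finset.range (n + 1), (n.choose u : ℂ) * c ^ u * D (n - u + 1))
      = D (n + 1) + ∑ u ∈ Finset.range n, (n.choose (u + 1) : ℂ) * c ^ (u + 1) * D (n - u) := by
    rw [Finset.sum_range_succ' (fun u => (n.choose u : ℂ) * c ^ u * D (n - u + 1)) n]
    rw [add_comm]
    congr 1
    · simp
    · apply Finset.sum_congr rfl
      intro u hu
      have : n - (u + 1) + 1 = n - u := by
        have := Finset.mem_range.mp hu; omega
      rw [this]
  have h4 : ∑ u ∈ Finset.range (n + 1), (n.choose (u + 1) : ℂ) * c ^ (u + 1) * D (n - u)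
      = ∑ u ∈ Finset.range n, (n.choose (u + 1) : ℂ) * c ^ (u + 1) * D (n - u) := by
    rw [Finset.sum_range_succ]
    simp
  rw [h1, h3]
  simp only [h2, add_mul, Finset.sum_add_distrib]
  rw [← h4, Finset.mul_sum]
  have h5 : ∑ u ∈ Finset.range (n + 1), c * ((n.choose u : ℂ) * c ^ u * D (n - u))
      = ∑ u ∈ Finset.range (n + 1), (n.choose u : ℂ) * c ^ (u + 1) * D (n - u) :=
    Finset.sum_congr rfl fun u _ => by ring
  rw [h5]; ring

lemma myLeibniz_exp {f : ℂ → ℂ} {x : ℂ} (hf : AnalyticAt ℂ f x) (c : ℂ) (n : ℕ) :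
    ∀ᶠ y in nhds x, iteratedDeriv n (fun z => f z * Complex.exp (c * z)) y =
      (∑ u ∈ Finset.range (n + 1), (n.choose u : ℂ) * c ^ u * iteratedDeriv (n - u) f y) *
        Complex.exp (c * y) := by
  induction n with
  | zero => exact Eventually.of_forall fun y => by simp
  | succ n ih =>
    filter_upwards [ih.eventually_nhds, hf.eventually_analyticAt] with y hy hfy
    rw [iteratedDeriv_succ, Filter.EventuallyEq.deriv_eq hy]
    have hE : HasDerivAt (fun z => Complex.exp (c * z)) (c * Complex.exp (c * y)) y := by
      simpa [mul_comm] using ((hasDerivAt_id y).const_mul c).cexp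
    have hS : HasDerivAt
        (fun z => ∑ u ∈ Finset.range (n + 1), (n.choose u : ℂ) * c ^ u * iteratedDeriv (n - u) f z)
        (∑ u ∈ Finset.range (n + 1), (n.choose u : ℂ) * c ^ u * iteratedDeriv (n - u + 1) f y)
        y := by
      apply HasDerivAt.fun_sum
      intro u hu
      have hd : HasDerivAt (iteratedDeriv (n - u) f) (iteratedDeriv (n - u + 1) f y) y := by
        rw [iteratedDeriv_succ]
        exact (myAnalyticAt_iteratedDeriv hfy (n - u)).differentiableAt.hasDerivAt
      exact hd.const_mul _
    rw [(hS.fun_mul hE).deriv]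
    have := myPascal (fun m => iteratedDeriv m f y) c n
    calc (∑ u ∈ Finset.range (n + 1), (n.choose u : ℂ) * c ^ u * iteratedDeriv (n - u + 1) f y) *
            Complex.exp (c * y) +
          (∑ u ∈ Finset.range (n + 1), (n.choose u : ℂ) * c ^ u * iteratedDeriv (n - u) f y) *
            (c * Complex.exp (c * y))
        = ((∑ u ∈ Finset.range (n + 1), (n.choose u : ℂ) * c ^ u * iteratedDeriv (n - u + 1) f y)
            + c * ∑ u ∈ Finset.range (n + 1), (n.choose u : ℂ) * c ^ u * iteratedDeriv (n - u) f y)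
            * Complex.exp (c * y) := by ring
      _ = (∑ u ∈ Finset.range (n + 2), ((n + 1).choose u : ℂ) * c ^ u *
            iteratedDeriv (n + 1 - u) f y) * Complex.exp (c * y) := by rw [this]

lemma myFactor {a : ℂ → ℂ} {lk : ℂ} {L : ℕ} (ha : AnalyticAt ℂ a lk)
    (hzero : ∀ m < L, iteratedDeriv m a lk = 0) (hLder : iteratedDeriv L a lk ≠ 0) :
    ∃ h : ℂ → ℂ, AnalyticAt ℂ h lk ∧ h lk ≠ 0 ∧
      ∀ᶠ z in nhds lk, a z = (z - lk) ^ L * h z := by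
  obtain ⟨p, hp⟩ := ha
  have hcoe : ∀ m : ℕ, (m.factorial : ℕ) • p.coeff m = iteratedDeriv m a lk := by
    intro m
    obtain ⟨r, hball⟩ := hp
    have h1 := hball.factorial_smul (1 : ℂ) m
    rw [iteratedDeriv_eq_iteratedFDeriv]
    exact h1
  have hpzero : ∀ m < L, p m = 0 := by
    intro m hm
    rw [← FormalMultilinearSeries.coeff_eq_zero]
    have := hcoe m
    rw [hzero m hm, smul_eq_zero] at this
    rcases this with h | h
    · exact absurd h m.factorial_ne_zero
    · exact h
  have hpL : p L ≠ 0 := by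
    intro h0
    apply hLder
    rw [← hcoe L, FormalMultilinearSeries.coeff_eq_zero.mpr h0, smul_zero]
  have hpne : p ≠ 0 := fun h0 => hpL (by simp [h0])
  have horder : p.order = L := by
    have h1 : p.order ≤ L := Nat.sInf_le hpL
    have h2 : ¬ p.order < L := fun h => p.apply_order_ne_zero hpne (hpzero _ h)
    omega
  refine ⟨(Function.swap dslope lk)^[L] a, ⟨_, hp.has_fpower_series_iterate_dslope_fslope L⟩,
    ?_, ?_⟩
  · have := hp.iterate_dslope_fslope_ne_zero hpne
    rwa [horder] at this
  · have := hp.eq_pow_order_mul_iterate_dslope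
    rw [horder] at this
    filter_upwards [Eventually.of_forall this] with z hz
    rw [hz, smul_eq_mul]

/-- GNFT time-shift property for norming constants. With
`a'(λ) = a(λ)e^{jλt₀}`, `b'(λ) = b(λ)e^{−jλt₀}` and norming constants defined by
`Q_{k,ℓ} = (jˡ/(L−ℓ−1)!)·lim_{λ→λk} d^{L−ℓ−1}/dλ^{L−ℓ−1}[(λ−λk)^L b(λ)/a(λ)]`
(and analogously for the primed quantities), one has
`Q'_{k,ℓ} = e^{−2jλk t₀} Σ_{u=0}^{L−ℓ−1} (−2t₀)^u/u! · Q_{k,ℓ+u}`. -/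
theorem gnft_time_shift_norming_constants
    (lk : ℂ) (t0 : ℝ) (L : ℕ) (hL : 1 ≤ L) (a b : ℂ → ℂ) (Q Q' : ℕ → ℂ)
    (ha : AnalyticAt ℂ a lk) (hb : AnalyticAt ℂ b lk)
    (hzero : ∀ m < L, iteratedDeriv m a lk = 0)
    (hLder : iteratedDeriv L a lk ≠ 0)
    (hbne : b lk ≠ 0)
    (hQ : ∀ ℓ < L,
      Tendsto (fun lam => (I ^ ℓ / ((L - ℓ - 1).factorial : ℂ)) *
          iteratedDeriv (L - ℓ - 1) (fun μ => (μ - lk) ^ L * b μ / a μ) lam)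
        (nhdsWithin lk {lk}ᶜ) (nhds (Q ℓ)))
    (hQ' : ∀ ℓ < L,
      Tendsto (fun lam => (I ^ ℓ / ((L - ℓ - 1).factorial : ℂ)) *
          iteratedDeriv (L - ℓ - 1)
            (fun μ => (μ - lk) ^ L * (b μ * Complex.exp (-I * μ * t0)) /
              (a μ * Complex.exp (I * μ * t0))) lam)
        (nhdsWithin lk {lk}ᶜ) (nhds (Q' ℓ))) :
    ∀ ℓ < L,
      Q' ℓ = Complex.exp (-2 * I * lk * t0) *
        ∑ u ∈ Finset.range (L - ℓ), (-2 * (t0 : ℂ)) ^ u / (u.factorial : ℂ) * Q (ℓ + u) := by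
  obtain ⟨h, hh_an, hh_ne, heq⟩ := myFactor ha hzero hLder
  set c : ℂ := -2 * I * (t0 : ℂ) with hc
  set F : ℂ → ℂ := fun μ => b μ / h μ with hFdef
  have hFan : AnalyticAt ℂ F lk := hb.div hh_an hh_ne
  have hWev : ∀ᶠ z in nhds lk, a z = (z - lk) ^ L * h z ∧ h z ≠ 0 :=
    heq.and (hh_an.continuousAt.eventually_ne hh_ne)
  obtain ⟨U, hU, hUo, hUlk⟩ := eventually_nhds_iff.mp hWev
  set V : Set ℂ := U \ {lk} with hVdef
  have hVo : IsOpen V := hUo.sdiff isClosed_singleton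
  have hVmem : V ∈ nhdsWithin lk {lk}ᶜ := by
    rw [hVdef, Set.diff_eq]
    exact inter_mem (mem_nhdsWithin_of_mem_nhds (hUo.mem_nhds hUlk)) self_mem_nhdsWithin
  have haV : ∀ μ ∈ V, a μ = (μ - lk) ^ L * h μ ∧ h μ ≠ 0 ∧ μ - lk ≠ 0 := by
    intro μ hμ
    obtain ⟨h1, h2⟩ := hU μ hμ.1
    exact ⟨h1, h2, sub_ne_zero.mpr (by simpa using hμ.2)⟩
  have limid : ∀ (G Fa : ℂ → ℂ), Set.EqOn G Fa V → AnalyticAt ℂ Fa lk → ∀ (m : ℕ) (q cst : ℂ),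
      Tendsto (fun lam => cst * iteratedDeriv m G lam) (nhdsWithin lk {lk}ᶜ) (nhds q) →
      q = cst * iteratedDeriv m Fa lk := by
    intro G Fa hEq hFa m q cst htend
    have h1 : Set.EqOn (iteratedDeriv m G) (iteratedDeriv m Fa) V :=
      hEq.iteratedDeriv_of_isOpen hVo m
    have h2 : Tendsto (fun lam => cst * iteratedDeriv m Fa lam) (nhdsWithin lk {lk}ᶜ)
        (nhds (cst * iteratedDeriv m Fa lk)) :=
      tendsto_const_nhds.mul
        ((myAnalyticAt_iteratedDeriv hFa m).continuousAt.continuousWithinAt)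
    have h3 : (fun lam => cst * iteratedDeriv m G lam)
        =ᶠ[nhdsWithin lk {lk}ᶜ] (fun lam => cst * iteratedDeriv m Fa lam) := by
      filter_upwards [hVmem] with z hz
      rw [h1 hz]
    exact tendsto_nhds_unique (Tendsto.congr' h3 htend) h2
  have hGF : Set.EqOn (fun μ => (μ - lk) ^ L * b μ / a μ) F V := by
    intro μ hμ
    obtain ⟨h1, h2, h3⟩ := haV μ hμ
    simp only [hFdef]
    rw [h1, mul_div_mul_left _ _ (pow_ne_zero L h3)]
  have hQval : ∀ m, m < L →
      Q m = (I ^ m / ((L - m - 1).factorial : ℂ)) * iteratedDeriv (L - m - 1) F lk :=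
    fun m hm => limid _ _ hGF hFan _ _ _ (hQ m hm)
  intro ℓ hℓ
  set n : ℕ := L - ℓ - 1 with hn
  have hG'F' : Set.EqOn
      (fun μ => (μ - lk) ^ L * (b μ * Complex.exp (-I * μ * t0)) /
        (a μ * Complex.exp (I * μ * t0)))
      (fun μ => F μ * Complex.exp (c * μ)) V := by
    intro μ hμ
    obtain ⟨h1, h2, h3⟩ := haV μ hμ
    have haμ : a μ ≠ 0 := by rw [h1]; exact mul_ne_zero (pow_ne_zero L h3) h2
    have hsplit : Complex.exp (-I * μ * t0) = Complex.exp (c * μ) * Complex.exp (I * μ * t0) := by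
      rw [← Complex.exp_add]
      congr 1
      rw [hc]; ring
    simp only [hFdef]
    rw [hsplit, h1]
    field_simp
  have hF'an : AnalyticAt ℂ (fun μ => F μ * Complex.exp (c * μ)) lk :=
    hFan.mul ((analyticAt_const.mul analyticAt_id).cexp)
  have hQ'val : Q' ℓ = (I ^ ℓ / ((L - ℓ - 1).factorial : ℂ)) *
      iteratedDeriv (L - ℓ - 1) (fun μ => F μ * Complex.exp (c * μ)) lk :=
    limid _ _ hG'F' hF'an _ _ _ (hQ' ℓ hℓ)
  have hlb := (myLeibniz_exp hFan c n).self_of_nhds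
  have hrange : L - ℓ = n + 1 := by omega
  rw [hQ'val, ← hn, hlb, hrange]
  have hE0 : Complex.exp (-2 * I * lk * t0) = Complex.exp (c * lk) := by
    congr 1; rw [hc]; ring
  rw [hE0, Finset.mul_sum, Finset.sum_mul, Finset.mul_sum]
  apply Finset.sum_congr rfl
  intro u hu
  have hun : u ≤ n := by simpa using Nat.lt_succ_iff.mp (Finset.mem_range.mp hu)
  have hidx : L - (ℓ + u) - 1 = n - u := by omega
  rw [hQval (ℓ + u) (by omega), hidx]
  have hC : ((n.choose u : ℕ) : ℂ) = (n.factorial : ℂ) /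
      ((u.factorial : ℂ) * ((n - u).factorial : ℂ)) := by
    rw [Nat.cast_choose ℂ hun]
  rw [hC, pow_add, hc]
  have hI : (-2 * I * (t0 : ℂ)) ^ u = (-2 * (t0 : ℂ)) ^ u * I ^ u := by
    rw [show -2 * I * (t0 : ℂ) = -2 * (t0 : ℂ) * I by ring, mul_pow]
  rw [hI]
  have f1 : ((n.factorial : ℕ) : ℂ) ≠ 0 := Nat.cast_ne_zero.mpr n.factorial_ne_zero
  have f2 : ((u.factorial : ℕ) : ℂ) ≠ 0 := Nat.cast_ne_zero.mpr u.factorial_ne_zero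
  have f3 : (((n - u).factorial : ℕ) : ℂ) ≠ 0 := Nat.cast_ne_zero.mpr (n - u).factorial_ne_zero
  field_simp
end
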